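/- With F_n(w) = (1/(2√w))·sqrt(c_n(w)/a_n(w))·sqrt((a_n(w)·c_n(w) − b_n(w)²)/(w·a_n(w)²)), for sufficiently large n, ∫_{1+1/n}^{1+(log n)²/n} F_n(w) dw ≤ 2·n·log log n. -/

import Mathlib

open Finset Real

noncomputable def aa (n : ℕ) (w : ℝ) : ℝ := ∑ j ∈ Finset.range (n+1), w ^ j
noncomputable def bb (n : ℕ) (w : ℝ) : ℝ := ∑ j ∈ Finset.range (n+1), (j : ℝ) * w ^ j
noncomputable def cc (n : ℕ) (w : ℝ) : ℝ := ∑ j ∈ Finset.range (n+1), (j : ℝ)^2 * w ^ j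

noncomputable def F (n : ℕ) (w : ℝ) : ℝ :=
  (1 / (2 * Real.sqrt w)) * Real.sqrt (cc n w / aa n w) *
    Real.sqrt ((aa n w * cc n w - (bb n w)^2) / (w * (aa n w)^2))

-- binomial lower bound
lemma binom2 (y : ℝ) (hy : 0 ≤ y) (m : ℕ) :
    1 + m * y + (m * ((m:ℝ) - 1)) / 2 * y ^ 2 ≤ (1 + y) ^ m := by
  induction m with
  | zero => simp
  | succ m ih =>
    have hm : (0:ℝ) ≤ (m:ℝ) * ((m:ℝ) - 1) := by
      rcases Nat.eq_zero_or_pos m with h | h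
      · simp [h]
      · have : (1:ℝ) ≤ (m:ℝ) := by exact_mod_cast h
        nlinarith
    have key : (1:ℝ) + (↑(m+1)) * y + ((↑(m+1)) * ((↑(m+1):ℝ) - 1))/2 * y^2
        ≤ (1 + m*y + (m*((m:ℝ)-1))/2 * y^2) * (1+y) := by
      push_cast
      nlinarith [mul_nonneg (mul_nonneg hm (sq_nonneg y)) hy]
    calc (1:ℝ) + (↑(m+1)) * y + ((↑(m+1)) * ((↑(m+1):ℝ) - 1))/2 * y^2
        ≤ (1 + m*y + (m*((m:ℝ)-1))/2 * y^2) * (1+y) := key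
      _ ≤ (1+y)^m * (1+y) := by
          apply mul_le_mul_of_nonneg_right ih (by linarith)
      _ = (1+y)^(m+1) := by ring

lemma sq_geom_identity (x : ℝ) (n : ℕ) :
    (1 - x)^3 * (∑ k ∈ Finset.range (n+1), (k:ℝ)^2 * x^k) =
      x + x^2 - x^(n+1) * (((n:ℝ)+1)^2 - (2*(n:ℝ)^2+2*(n:ℝ)-1)*x + (n:ℝ)^2*x^2) := by
  induction n with
  | zero => simp; ring
  | succ n ih =>
    rw [Finset.sum_range_succ, mul_add, ih]
    push_cast
    ring

lemma sq_geom_le (x : ℝ) (hx : 0 ≤ x) (n : ℕ) :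
    (1 - x)^3 * (∑ k ∈ Finset.range (n+1), (k:ℝ)^2 * x^k) ≤ x + x^2 := by
  rw [sq_geom_identity]
  have hq : 0 ≤ ((n:ℝ)+1)^2 - (2*(n:ℝ)^2+2*(n:ℝ)-1)*x + (n:ℝ)^2*x^2 := by
    nlinarith [sq_nonneg ((n:ℝ)*x - ((n:ℝ)+1))]
  have := mul_nonneg (pow_nonneg hx (n+1)) hq
  linarith

lemma aa_pos (n : ℕ) (w : ℝ) (hw : 0 < w) : 0 < aa n w :=
  Finset.sum_pos (fun j _ => pow_pos hw j) (by simp)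

lemma cc_le (n : ℕ) (w : ℝ) (hw : 0 ≤ w) : cc n w ≤ (n:ℝ)^2 * aa n w := by
  unfold cc aa
  rw [Finset.mul_sum]
  apply Finset.sum_le_sum
  intro j hj
  have hjn : (j:ℝ) ≤ n := by exact_mod_cast Nat.lt_succ_iff.mp (Finset.mem_range.mp hj)
  have : (j:ℝ)^2 ≤ (n:ℝ)^2 := by nlinarith [Nat.cast_nonneg (α := ℝ) j]
  exact mul_le_mul_of_nonneg_right this (pow_nonneg hw j)

lemma geom_aa (n : ℕ) (w : ℝ) : aa n w * (w - 1) = w^(n+1) - 1 := geom_sum_mul w (n+1)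

-- second moment around n
lemma moment_n (n : ℕ) (w : ℝ) :
    ((n:ℝ)^2 * aa n w - 2*(n:ℝ)*bb n w + cc n w) =
      ∑ k ∈ Finset.range (n+1), (k:ℝ)^2 * w^(n-k) := by
  have h1 : ∑ k ∈ Finset.range (n+1), (k:ℝ)^2 * w^(n-k)
      = ∑ j ∈ Finset.range (n+1), ((n:ℝ) - (j:ℝ))^2 * w^j := by
    rw [← Finset.sum_range_reflect]
    apply Finset.sum_congr rfl
    intro j hj
    have hjn : j ≤ n := Nat.lt_succ_iff.mp (Finset.mem_range.mp hj)
    have h2 : n + 1 - 1 - j = n - j := by omega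
    rw [h2, Nat.cast_sub hjn, Nat.sub_sub_self hjn]
  rw [h1]
  unfold aa bb cc
  rw [Finset.mul_sum, Finset.mul_sum, ← Finset.sum_sub_distrib, ← Finset.sum_add_distrib]
  apply Finset.sum_congr rfl
  intro j _
  ring

lemma var_bound (n : ℕ) (hn : 1 ≤ n) (w : ℝ) (h1 : 1 + 1/(n:ℝ) ≤ w) (h2 : w ≤ 6/5) :
    aa n w * cc n w - (bb n w)^2 ≤ 4 * (aa n w)^2 / (w-1)^2 := by
  have hnR : (1:ℝ) ≤ (n:ℝ) := by exact_mod_cast hn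
  have hn0 : (0:ℝ) < (n:ℝ) := by linarith
  have hw1 : 1 < w := by
    have : (0:ℝ) < 1/(n:ℝ) := by positivity
    linarith
  have hw0 : 0 < w := lt_trans one_pos hw1
  have ha : 0 < aa n w := aa_pos _ _ hw0
  set a := aa n w with hadef
  set b := bb n w with hbdef
  set c := cc n w with hcdef
  have k1 : a*c - b^2 ≤ a * ((n:ℝ)^2*a - 2*(n:ℝ)*b + c) := by
    nlinarith [sq_nonneg ((n:ℝ)*a - b)]
  set x := w⁻¹ with hxdef
  have hx0 : 0 < x := inv_pos.mpr hw0
  have hx1 : x < 1 := inv_lt_one_of_one_lt₀ hw1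
  set S := ∑ k ∈ Finset.range (n+1), (k:ℝ)^2 * x^k with hSdef
  have hS0 : 0 ≤ S := by
    apply Finset.sum_nonneg; intro k _; positivity
  have hsum : ∑ k ∈ Finset.range (n+1), (k:ℝ)^2 * w^(n-k) = w^n * S := by
    rw [hSdef, Finset.mul_sum]
    apply Finset.sum_congr rfl
    intro k hk
    have hkn : k ≤ n := Nat.lt_succ_iff.mp (Finset.mem_range.mp hk)
    have hwk : (w:ℝ)^k ≠ 0 := by positivity
    have hpw : w^n * (w⁻¹)^k = w^(n-k) := by
      rw [inv_pow, mul_inv_eq_iff_eq_mul₀ hwk]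
      exact (pow_sub_mul_pow w hkn).symm
    rw [hxdef, ← hpw]; ring
  have hSle : S ≤ (x + x^2)/(1-x)^3 := by
    rw [le_div_iff₀ (pow_pos (by linarith : (0:ℝ) < 1-x) 3)]
    have := sq_geom_le x hx0.le n
    rw [← hSdef] at this
    linarith [this]
  set W := w^(n+1) with hWdef
  have heq : w^n * ((x+x^2)/(1-x)^3) = W*(w+1)/(w-1)^3 := by
    rw [hxdef, hWdef]
    have hw0' : w ≠ 0 := ne_of_gt hw0
    have hw1' : w - 1 ≠ 0 := by linarith
    field_simp
    ring
  have hWlb : (5:ℝ)/2 ≤ W := by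
    have hb := binom2 (1/(n:ℝ)) (by positivity) (n+1)
    have hmono : (1 + 1/(n:ℝ))^(n+1) ≤ w^(n+1) := by
      apply pow_le_pow_left₀ (by positivity) h1
    push_cast at hb
    have e : 1 + ((n:ℝ)+1)*(1/(n:ℝ)) + (((n:ℝ)+1)*(((n:ℝ)+1)-1))/2*(1/(n:ℝ))^2
        = 5/2 + (3/2)*(1/(n:ℝ)) := by
      field_simp
      ring
    have ht0 : (0:ℝ) ≤ 1/(n:ℝ) := by positivity
    rw [hWdef]
    calc (5:ℝ)/2 ≤ 5/2 + (3/2)*(1/(n:ℝ)) := by linarith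
      _ ≤ (1 + 1/(n:ℝ))^(n+1) := by rw [← e]; linarith [hb]
      _ ≤ w^(n+1) := hmono
  have hWpos : 0 < W := by rw [hWdef]; positivity
  have key2 : W*(w+1) ≤ 4*(W-1) := by
    nlinarith [mul_le_mul_of_nonneg_left h2 hWpos.le]
  have hw1' : (0:ℝ) < w - 1 := by linarith
  have hmom : (n:ℝ)^2*a - 2*(n:ℝ)*b + c ≤ W*(w+1)/(w-1)^3 := by
    rw [hadef, hbdef, hcdef, moment_n, hsum, ← heq]
    exact mul_le_mul_of_nonneg_left hSle (by positivity)
  have hstep : W*(w+1)/(w-1)^3 ≤ 4*(W-1)/(w-1)^3 := by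
    apply div_le_div_of_nonneg_right key2 (by positivity)
  have hW1 : W - 1 = a*(w-1) := by rw [hWdef, hadef, ← geom_aa]
  have hfin : a * (4*(W-1)/(w-1)^3) = 4*a^2/(w-1)^2 := by
    rw [hW1]
    field_simp
  calc a*c - b^2 ≤ a * ((n:ℝ)^2*a - 2*(n:ℝ)*b + c) := k1
    _ ≤ a * (4*(W-1)/(w-1)^3) := by
        apply mul_le_mul_of_nonneg_left (le_trans hmom hstep) ha.le
    _ = 4*a^2/(w-1)^2 := hfin

lemma F_bound (n : ℕ) (hn : 1 ≤ n) (w : ℝ) (h1 : 1 + 1/(n:ℝ) ≤ w) (h2 : w ≤ 6/5) :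
    F n w ≤ (n:ℝ) * (w - 1)⁻¹ := by
  have hnR : (1:ℝ) ≤ (n:ℝ) := by exact_mod_cast hn
  have hw1 : 1 < w := by
    have : (0:ℝ) < 1/(n:ℝ) := by positivity
    linarith
  have hw0 : 0 < w := lt_trans one_pos hw1
  have hw1' : (0:ℝ) < w - 1 := by linarith
  have ha : 0 < aa n w := aa_pos n w hw0
  have hsw : 0 < Real.sqrt w := Real.sqrt_pos.mpr hw0
  have hss : Real.sqrt w * Real.sqrt w = w := Real.mul_self_sqrt hw0.le
  have hs1 : Real.sqrt (cc n w / aa n w) ≤ (n:ℝ) := by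
    rw [show ((n:ℝ)) = Real.sqrt ((n:ℝ)^2) from (Real.sqrt_sq (by positivity)).symm]
    apply Real.sqrt_le_sqrt
    rw [div_le_iff₀ ha]
    calc cc n w ≤ (n:ℝ)^2 * aa n w := cc_le n w hw0.le
      _ = (n:ℝ)^2 * aa n w := rfl
  have hs2 : Real.sqrt ((aa n w * cc n w - (bb n w)^2) / (w * (aa n w)^2))
      ≤ 2 / ((w-1) * Real.sqrt w) := by
    have hb : (aa n w * cc n w - (bb n w)^2) / (w * (aa n w)^2) ≤ 4/(w*(w-1)^2) := by
      calc (aa n w * cc n w - (bb n w)^2) / (w * (aa n w)^2)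
          ≤ (4 * (aa n w)^2 / (w-1)^2) / (w * (aa n w)^2) := by
            apply div_le_div_of_nonneg_right (var_bound n hn w h1 h2) ?_  -- maybe wrong name
            positivity
        _ = 4/(w*(w-1)^2) := by
            field_simp
    have heq2 : Real.sqrt ((4:ℝ)/(w*(w-1)^2)) = 2/((w-1)*Real.sqrt w) := by
      rw [show (4:ℝ)/(w*(w-1)^2) = (2/((w-1)*Real.sqrt w))^2 by
            rw [div_pow, mul_pow, Real.sq_sqrt hw0.le]; ring,
          Real.sqrt_sq (le_of_lt (div_pos two_pos (mul_pos hw1' hsw)))]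
    calc Real.sqrt ((aa n w * cc n w - (bb n w)^2) / (w * (aa n w)^2))
        ≤ Real.sqrt ((4:ℝ)/(w*(w-1)^2)) := Real.sqrt_le_sqrt hb
      _ = 2/((w-1)*Real.sqrt w) := heq2
  have hpos1 : (0:ℝ) ≤ 1 / (2 * Real.sqrt w) := by positivity
  calc F n w ≤ (1 / (2 * Real.sqrt w)) * (n:ℝ) * (2/((w-1) * Real.sqrt w)) := by
        unfold F
        apply mul_le_mul
        · exact mul_le_mul_of_nonneg_left hs1 hpos1
        · exact hs2
        · exact Real.sqrt_nonneg _
        · positivity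
    _ = (n:ℝ)/((w-1)*w) := by
        field_simp
        linear_combination (-1:ℝ) * hss
    _ ≤ (n:ℝ)*(w-1)⁻¹ := by
        rw [← div_eq_mul_inv]
        apply div_le_div_of_nonneg_left (by linarith) hw1' ?_  -- guess
        nlinarith

lemma aa_cont (n : ℕ) : Continuous (aa n) := by
  unfold aa; exact continuous_finset_sum _ (fun i _ => continuous_pow i)
lemma bb_cont (n : ℕ) : Continuous (bb n) := by
  unfold bb; exact continuous_finset_sum _ (fun i _ => continuous_const.mul (continuous_pow i))
lemma cc_cont (n : ℕ) : Continuous (cc n) := by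
  unfold cc; exact continuous_finset_sum _ (fun i _ => continuous_const.mul (continuous_pow i))

lemma F_contOn (n : ℕ) (S : Set ℝ) (hS : ∀ w ∈ S, 0 < w) : ContinuousOn (F n) S := by
  have ha : ∀ w ∈ S, aa n w ≠ 0 := fun w hw => ne_of_gt (aa_pos n w (hS w hw))
  unfold F
  apply ContinuousOn.mul
  apply ContinuousOn.mul
  · apply ContinuousOn.div continuousOn_const
      ((continuous_const.mul Real.continuous_sqrt).continuousOn)
    intro w hw
    have : 0 < Real.sqrt w := Real.sqrt_pos.mpr (hS w hw)
    exact mul_ne_zero two_ne_zero this.ne'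
  · apply Real.continuous_sqrt.comp_continuousOn
    exact ContinuousOn.div (cc_cont n).continuousOn (aa_cont n).continuousOn ha
  · apply Real.continuous_sqrt.comp_continuousOn
    apply ContinuousOn.div
    · exact (((aa_cont n).mul (cc_cont n)).sub ((bb_cont n).pow 2)).continuousOn
    · exact (continuous_id.mul ((aa_cont n).pow 2)).continuousOn
    · intro w hw
      have h1 := hS w hw
      have h2 := aa_pos n w h1
      positivity

theorem stmt10 : ∃ N : ℕ, ∀ n : ℕ, N ≤ n →
    ∫ w in (1 + 1 / (n : ℝ))..(1 + (Real.log n)^2 / n), F n w ≤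
      2 * n * Real.log (Real.log n) := by
  use 6400
  intro n hn
  have hn1 : 1 ≤ n := le_trans (by norm_num) hn
  have hnR : (6400:ℝ) ≤ (n:ℝ) := by exact_mod_cast hn
  have hn0 : (0:ℝ) < (n:ℝ) := by linarith
  set L := Real.log n with hL
  have hL1 : 1 ≤ L := by
    rw [hL, Real.le_log_iff_exp_le hn0]
    have := Real.exp_one_lt_d9
    linarith
  have hL0 : 0 < L := by linarith
  -- (log n)^2 ≤ n/5
  have hsq : L^2 ≤ (n:ℝ)/5 := by
    set s := Real.sqrt (Real.sqrt (n:ℝ)) with hs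
    have hrn : (0:ℝ) ≤ Real.sqrt (n:ℝ) := Real.sqrt_nonneg _
    have hs0 : 0 < s := Real.sqrt_pos.mpr (Real.sqrt_pos.mpr hn0)
    have hs2 : s^2 = Real.sqrt (n:ℝ) := Real.sq_sqrt hrn
    have hs4 : s^4 = (n:ℝ) := by
      have : s^4 = (s^2)^2 := by ring
      rw [this, hs2, Real.sq_sqrt hn0.le]
    have hlog4 : L = 4 * Real.log s := by
      rw [hL, ← hs4, Real.log_pow]
      norm_num
    have hls : Real.log s ≤ s := le_trans (Real.log_le_sub_one_of_pos hs0) (by linarith)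
    have hLle : L ≤ 4 * s := by rw [hlog4]; linarith
    have hsq1 : L^2 ≤ 16 * s^2 := by nlinarith [hL0.le]
    have h80 : (80:ℝ) ≤ Real.sqrt (n:ℝ) := by
      rw [show (80:ℝ) = Real.sqrt 6400 by
        rw [show (6400:ℝ) = 80^2 by norm_num, Real.sqrt_sq (by norm_num)]]
      exact Real.sqrt_le_sqrt hnR
    have hnn : Real.sqrt (n:ℝ) * Real.sqrt (n:ℝ) = (n:ℝ) := Real.mul_self_sqrt hn0.le
    nlinarith [hsq1, hs2, h80, hnn]
  set u := 1 + 1/(n:ℝ) with hu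
  set v := 1 + L^2/(n:ℝ) with hv
  have huv : u ≤ v := by
    rw [hu, hv]
    have : (1:ℝ) ≤ L^2 := by nlinarith
    gcongr
  have hv65 : v ≤ 6/5 := by
    rw [hv]
    have : L^2/(n:ℝ) ≤ 1/5 := by
      rw [div_le_div_iff₀ hn0 (by norm_num)]
      linarith
    linarith
  have hu1 : (1:ℝ) < u := by
    rw [hu]
    have h0n : (0:ℝ) < 1/(n:ℝ) := by positivity
    linarith
  -- integrability
  have hpos : ∀ w ∈ Set.uIcc u v, 0 < w := by
    rw [Set.uIcc_of_le huv]
    intro w hw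
    linarith [hw.1]
  have hFi : IntervalIntegrable (F n) MeasureTheory.volume u v :=
    (F_contOn n _ hpos).intervalIntegrable
  have hgc : ContinuousOn (fun w : ℝ => (n:ℝ) * (w-1)⁻¹) (Set.uIcc u v) := by
    apply ContinuousOn.mul continuousOn_const
    apply ContinuousOn.inv₀ (continuous_id.sub continuous_const).continuousOn
    rw [Set.uIcc_of_le huv]
    intro w hw
    have := hw.1
    have : (1:ℝ) < w := lt_of_lt_of_le hu1 hw.1
    intro hcon
    simp at hcon
    linarith [hcon]
  have hgi : IntervalIntegrable (fun w : ℝ => (n:ℝ) * (w-1)⁻¹) MeasureTheory.volume u v :=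
    hgc.intervalIntegrable
  have hmono : (∫ w in u..v, F n w) ≤ ∫ w in u..v, (n:ℝ) * (w-1)⁻¹ := by
    apply intervalIntegral.integral_mono_on huv hFi hgi
    intro w hw
    exact F_bound n hn1 w (show 1 + 1/(n:ℝ) ≤ w from hw.1) (le_trans hw.2 hv65)
  have hcalc : (∫ w in u..v, (n:ℝ) * (w-1)⁻¹) = (n:ℝ) * (2 * Real.log L) := by
    rw [intervalIntegral.integral_const_mul]
    have hshift : (∫ w in u..v, (w-1)⁻¹) = ∫ x in (u-1)..(v-1), x⁻¹ := by
      have := intervalIntegral.integral_comp_sub_right (a := u) (b := v) (fun x : ℝ => x⁻¹) 1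
      exact this
    rw [hshift]
    have hu0 : (0:ℝ) < u - 1 := by linarith
    have hv0 : (0:ℝ) < v - 1 := by linarith [huv]
    rw [integral_inv (Set.notMem_uIcc_of_lt hu0 hv0)]
    have : (v-1)/(u-1) = L^2 := by
      rw [hu, hv]
      field_simp
      ring
    rw [this, Real.log_pow]
    norm_num
  rw [hcalc] at hmono
  calc (∫ w in u..v, F n w) ≤ (n:ℝ) * (2 * Real.log L) := hmono
    _ = 2 * n * Real.log L := by ring
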